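/- With the two-bridge setup over ℂ[u] and p ≥ 3, the polynomials W₁₁ and φ_W in ℂ[u] both have degree (p−1)/2, and the leading coefficient of each lies in {1, −1}; moreover W₁₁ and φ_W have the same leading coefficient. -/

import Mathlib

open Matrix Polynomial

/-- `ε_i = (−1)^⌊iq/p⌋`. -/
def eps (p : ℕ) (q : ℤ) (i : ℕ) : ℤ :=
  if ((i : ℤ) * q).fdiv p % 2 = 0 then 1 else -1

/-- `G₁ = [[d, 1], [0, d⁻¹]]` over `ℂ[u]`. -/
noncomputable def G1 (d : ℂ) : Matrix (Fin 2) (Fin 2) (Polynomial ℂ) :=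
  !![C d, 1; 0, C d⁻¹]

/-- `G₂ = [[d, 0], [−u, d⁻¹]]` over `ℂ[u]`. -/
noncomputable def G2 (d : ℂ) : Matrix (Fin 2) (Fin 2) (Polynomial ℂ) :=
  !![C d, 0; -X, C d⁻¹]

/-- `W = G₁^{ε₁}·G₂^{ε₂}·⋯·G₁^{ε_{p−2}}·G₂^{ε_{p−1}}`. -/
noncomputable def twoBridgeW (p : ℕ) (q : ℤ) (d : ℂ) :
    Matrix (Fin 2) (Fin 2) (Polynomial ℂ) :=
  ((List.range (p - 1)).map
    (fun i => (if (i + 1) % 2 = 1 then G1 d else G2 d) ^ eps p q (i + 1))).prod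

/-- The Riley polynomial `φ_W = W₁₁ − (d − d⁻¹)W₁₂`. -/
noncomputable def rileyPoly (p : ℕ) (q : ℤ) (d : ℂ) : Polynomial ℂ :=
  twoBridgeW p q d 0 0 - C (d - d⁻¹) * twoBridgeW p q d 0 1

lemma eps_cases (p : ℕ) (q : ℤ) (i : ℕ) : eps p q i = 1 ∨ eps p q i = -1 := by
  unfold eps; split <;> simp

lemma G1_inv (d : ℂ) (hd : d ≠ 0) : (G1 d) ^ (-1 : ℤ) = !![C d⁻¹, -1; 0, C d] := by
  rw [Matrix.zpow_neg_one]
  apply Matrix.inv_eq_right_inv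
  rw [G1, Matrix.mul_fin_two, Matrix.one_fin_two]
  congr 1 <;> simp [← C_mul, mul_inv_cancel₀ hd, inv_mul_cancel₀ hd]

lemma G2_inv (d : ℂ) (hd : d ≠ 0) : (G2 d) ^ (-1 : ℤ) = !![C d⁻¹, 0; X, C d] := by
  rw [Matrix.zpow_neg_one]
  apply Matrix.inv_eq_right_inv
  rw [G2, Matrix.mul_fin_two, Matrix.one_fin_two]
  congr 1 <;> simp [← C_mul, mul_inv_cancel₀ hd, inv_mul_cancel₀ hd]

/-- Invariant for products of pairs. -/
def Good (M : Matrix (Fin 2) (Fin 2) (Polynomial ℂ)) (k : ℕ) (s : ℂ) : Prop :=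
  (M 0 0).coeff k = s ∧ (M 0 0).natDegree ≤ k ∧ (M 0 1).degree < (k : WithBot ℕ) ∧
    (M 1 0).natDegree ≤ k ∧ (M 1 1).degree < (k : WithBot ℕ)

/-- Property of a single pair matrix. -/
def PairGood (Q : Matrix (Fin 2) (Fin 2) (Polynomial ℂ)) (t : ℂ) : Prop :=
  (Q 0 0).coeff 1 = t ∧ (Q 0 0).natDegree ≤ 1 ∧ (Q 0 1).degree ≤ 0 ∧
    (Q 1 0).natDegree ≤ 1 ∧ (Q 1 1).degree ≤ 0

lemma pairGood_good {Q : Matrix (Fin 2) (Fin 2) (Polynomial ℂ)} {t : ℂ}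
    (h : PairGood Q t) : Good Q 1 t := by
  obtain ⟨qc, q00, q01, q10, q11⟩ := h
  exact ⟨qc, q00, lt_of_le_of_lt q01 (by exact_mod_cast Nat.zero_lt_one), q10,
    lt_of_le_of_lt q11 (by exact_mod_cast Nat.zero_lt_one)⟩

lemma wb_add_lt_succ {a b : WithBot ℕ} {k : ℕ} (ha : a < (k : WithBot ℕ))
    (hb : b ≤ ((1 : ℕ) : WithBot ℕ)) : a + b < ((k + 1 : ℕ) : WithBot ℕ) := by
  have hbot : (⊥ : WithBot ℕ) < ((k + 1 : ℕ) : WithBot ℕ) := by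
    simpa [Nat.cast_withBot] using WithBot.bot_lt_coe (k + 1)
  cases a with
  | bot => rw [WithBot.bot_add]; exact hbot
  | coe n =>
    cases b with
    | bot => rw [WithBot.add_bot]; exact hbot
    | coe m =>
      simp only [Nat.cast_withBot] at *
      rw [← WithBot.coe_add, WithBot.coe_lt_coe] at *
      rw [WithBot.coe_le_coe] at hb
      omega

lemma wb_le_of_natDeg {p : Polynomial ℂ} {k : ℕ} (h : p.natDegree ≤ k) :
    p.degree ≤ (k : WithBot ℕ) := natDegree_le_iff_degree_le.mp h

lemma natDeg_of_deg_lt {p : Polynomial ℂ} {k : ℕ} (h : p.degree < (k : WithBot ℕ)) :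
    p.natDegree ≤ k := natDegree_le_iff_degree_le.mpr h.le

lemma good_step {M Q : Matrix (Fin 2) (Fin 2) (Polynomial ℂ)} {k : ℕ} {s t : ℂ}
    (hM : Good M k s) (hQ : PairGood Q t) : Good (M * Q) (k + 1) (s * t) := by
  obtain ⟨hc, h00, h01, h10, h11⟩ := hM
  obtain ⟨qc, q00, q01, q10, q11⟩ := hQ
  have mulapp : ∀ i j, (M * Q) i j = M i 0 * Q 0 j + M i 1 * Q 1 j := by
    intro i j; rw [Matrix.mul_apply, Fin.sum_univ_two]
  have h01' : (M 0 1).natDegree ≤ k := natDeg_of_deg_lt h01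
  have h11' : (M 1 1).natDegree ≤ k := natDeg_of_deg_lt h11
  have q10' : (Q 1 0).degree ≤ ((1 : ℕ) : WithBot ℕ) := wb_le_of_natDeg q10
  refine ⟨?_, ?_, ?_, ?_, ?_⟩
  · rw [mulapp, coeff_add, coeff_mul_add_eq_of_natDegree_le h00 q00,
      coeff_eq_zero_of_degree_lt
        (lt_of_le_of_lt (degree_mul_le _ _) (wb_add_lt_succ h01 q10')), hc, qc, add_zero]
  · rw [mulapp]
    refine (natDegree_add_le _ _).trans (max_le ?_ ?_)
    · exact natDegree_mul_le.trans (by omega)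
    · exact natDegree_mul_le.trans (by omega)
  · rw [mulapp]
    refine lt_of_le_of_lt (degree_add_le _ _) (max_lt ?_ ?_)
    · refine lt_of_le_of_lt (degree_mul_le _ _) ?_
      calc (M 0 0).degree + (Q 0 1).degree ≤ (k : WithBot ℕ) + 0 :=
            add_le_add (wb_le_of_natDeg h00) q01
        _ = (k : WithBot ℕ) := add_zero _
        _ < ((k + 1 : ℕ) : WithBot ℕ) := by exact_mod_cast Nat.lt_succ_self k
    · refine lt_of_le_of_lt (degree_mul_le _ _) ?_
      calc (M 0 1).degree + (Q 1 1).degree ≤ (M 0 1).degree + 0 :=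
            add_le_add le_rfl q11
        _ = (M 0 1).degree := add_zero _
        _ < (k : WithBot ℕ) := h01
        _ ≤ ((k + 1 : ℕ) : WithBot ℕ) := by exact_mod_cast Nat.le_succ k
  · rw [mulapp]
    refine (natDegree_add_le _ _).trans (max_le ?_ ?_)
    · exact natDegree_mul_le.trans (by omega)
    · exact natDegree_mul_le.trans (by omega)
  · rw [mulapp]
    refine lt_of_le_of_lt (degree_add_le _ _) (max_lt ?_ ?_)
    · refine lt_of_le_of_lt (degree_mul_le _ _) ?_
      calc (M 1 0).degree + (Q 0 1).degree ≤ (k : WithBot ℕ) + 0 :=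
            add_le_add (wb_le_of_natDeg h10) q01
        _ = (k : WithBot ℕ) := add_zero _
        _ < ((k + 1 : ℕ) : WithBot ℕ) := by exact_mod_cast Nat.lt_succ_self k
    · refine lt_of_le_of_lt (degree_mul_le _ _) ?_
      calc (M 1 1).degree + (Q 1 1).degree ≤ (M 1 1).degree + 0 :=
            add_le_add le_rfl q11
        _ = (M 1 1).degree := add_zero _
        _ < (k : WithBot ℕ) := h11
        _ ≤ ((k + 1 : ℕ) : WithBot ℕ) := by exact_mod_cast Nat.le_succ k

lemma pair_good (d : ℂ) (hd : d ≠ 0) (a b : ℤ) (ha : a = 1 ∨ a = -1)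
    (hb : b = 1 ∨ b = -1) :
    ∃ t : ℂ, (t = 1 ∨ t = -1) ∧ PairGood ((G1 d) ^ a * (G2 d) ^ b) t := by
  have hG1 : (G1 d) ^ (1 : ℤ) = !![C d, 1; 0, C d⁻¹] := by rw [zpow_one]; rfl
  have hG2 : (G2 d) ^ (1 : ℤ) = !![C d, 0; -X, C d⁻¹] := by rw [zpow_one]; rfl
  rcases ha with rfl | rfl <;> rcases hb with rfl | rfl
  · refine ⟨-1, Or.inr rfl, ?_⟩
    rw [hG1, hG2, Matrix.mul_fin_two]
    refine ⟨?_, ?_, ?_, ?_, ?_⟩ <;> simp [coeff_C, degree_C_le] <;> first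
      | compute_degree!
      | exact add_nonpos degree_C_le degree_C_le
  · refine ⟨1, Or.inl rfl, ?_⟩
    rw [hG1, G2_inv d hd, Matrix.mul_fin_two]
    refine ⟨?_, ?_, ?_, ?_, ?_⟩ <;> simp [coeff_C, degree_C_le] <;> first
      | compute_degree!
      | exact add_nonpos degree_C_le degree_C_le
  · refine ⟨1, Or.inl rfl, ?_⟩
    rw [G1_inv d hd, hG2, Matrix.mul_fin_two]
    refine ⟨?_, ?_, ?_, ?_, ?_⟩ <;> simp [coeff_C, degree_C_le] <;> first
      | compute_degree!
      | exact add_nonpos degree_C_le degree_C_le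
  · refine ⟨-1, Or.inr rfl, ?_⟩
    rw [G1_inv d hd, G2_inv d hd, Matrix.mul_fin_two]
    refine ⟨?_, ?_, ?_, ?_, ?_⟩ <;> simp [coeff_C, degree_C_le] <;> first
      | compute_degree!
      | exact add_nonpos degree_C_le degree_C_le

lemma prod_range_two_mul {M : Type*} [Monoid M] (f : ℕ → M) (n : ℕ) :
    ((List.range (2 * n)).map f).prod =
      ((List.range n).map (fun i => f (2 * i) * f (2 * i + 1))).prod := by
  induction n with
  | zero => simp
  | succ n ih =>
    have h2 : 2 * (n + 1) = (2 * n + 1) + 1 := by ring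
    rw [h2, List.range_succ, List.range_succ, List.map_append, List.map_append,
      List.prod_append, List.prod_append, ih, List.range_succ, List.map_append,
      List.prod_append]
    simp [mul_assoc]

lemma good_W (p : ℕ) (q : ℤ) (d : ℂ) (hd : d ≠ 0) (n : ℕ) (hn : 1 ≤ n) :
    ∃ s : ℂ, (s = 1 ∨ s = -1) ∧
      Good (((List.range n).map (fun i =>
        (G1 d) ^ eps p q (2 * i + 1) * (G2 d) ^ eps p q (2 * i + 2))).prod) n s := by
  induction n with
  | zero => omega
  | succ n ih =>
    rcases Nat.eq_or_lt_of_le hn with h1 | h1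
    · obtain ⟨t, ht, hQ⟩ := pair_good d hd _ _ (eps_cases p q 1) (eps_cases p q 2)
      refine ⟨t, ht, ?_⟩
      have : n = 0 := by omega
      subst this
      have he : ((List.range 1).map (fun i =>
          (G1 d) ^ eps p q (2 * i + 1) * (G2 d) ^ eps p q (2 * i + 2))).prod =
          (G1 d) ^ eps p q 1 * (G2 d) ^ eps p q 2 := by
        rw [show List.range 1 = [0] from rfl, List.map_cons, List.map_nil,
          List.prod_cons, List.prod_nil, mul_one]
      rw [he]
      exact pairGood_good hQ
    · obtain ⟨s, hs, hM⟩ := ih (by omega)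
      obtain ⟨t, ht, hQ⟩ := pair_good d hd _ _
        (eps_cases p q (2 * n + 1)) (eps_cases p q (2 * n + 2))
      refine ⟨s * t, ?_, ?_⟩
      · rcases hs with rfl | rfl <;> rcases ht with rfl | rfl <;> simp
      · rw [List.range_succ, List.map_append, List.prod_append]
        simpa using good_step hM hQ

theorem stmt_10 (p : ℕ) (q : ℤ) (hp : Odd p) (hq : Odd q)
    (hpq : IsCoprime (p : ℤ) q) (hp3 : 3 ≤ p)
    (hql : -(p : ℤ) < q) (hqu : q < (p : ℤ))
    (d : ℂ) (hd : d ≠ 0) :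
    (twoBridgeW p q d 0 0).degree = (((p - 1) / 2 : ℕ) : WithBot ℕ) ∧
    (rileyPoly p q d).degree = (((p - 1) / 2 : ℕ) : WithBot ℕ) ∧
    ((twoBridgeW p q d 0 0).leadingCoeff = 1 ∨
      (twoBridgeW p q d 0 0).leadingCoeff = -1) ∧
    ((rileyPoly p q d).leadingCoeff = 1 ∨ (rileyPoly p q d).leadingCoeff = -1) ∧
    (twoBridgeW p q d 0 0).leadingCoeff = (rileyPoly p q d).leadingCoeff := by
  obtain ⟨m, hm⟩ := hp
  set k : ℕ := (p - 1) / 2 with hk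
  have hpk : p - 1 = 2 * k := by omega
  have hk1 : 1 ≤ k := by omega
  have hW : twoBridgeW p q d = ((List.range k).map (fun i =>
      (G1 d) ^ eps p q (2 * i + 1) * (G2 d) ^ eps p q (2 * i + 2))).prod := by
    rw [twoBridgeW, hpk, prod_range_two_mul]
    refine congrArg List.prod (List.map_congr_left fun i _ => ?_)
    have e1 : (2 * i + 1) % 2 = 1 := by omega
    have e2 : (2 * i + 1 + 1) % 2 ≠ 1 := by omega
    rw [if_pos e1, if_neg e2]
  obtain ⟨s, hs, good⟩ := good_W p q d hd k hk1
  rw [← hW] at good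
  obtain ⟨hc, h00, h01, h10, h11⟩ := good
  have sne : s ≠ 0 := by rcases hs with rfl | rfl <;> norm_num
  have cne : (twoBridgeW p q d 0 0).coeff k ≠ 0 := by rw [hc]; exact sne
  have degW : (twoBridgeW p q d 0 0).degree = (k : WithBot ℕ) :=
    degree_eq_of_le_of_coeff_ne_zero (wb_le_of_natDeg h00) cne
  have ndW : (twoBridgeW p q d 0 0).natDegree = k :=
    natDegree_eq_of_degree_eq_some degW
  have leadW : (twoBridgeW p q d 0 0).leadingCoeff = s := by
    rw [leadingCoeff, ndW, hc]
  have hsub : (C (d - d⁻¹) * twoBridgeW p q d 0 1).degree < (k : WithBot ℕ) := by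
    refine lt_of_le_of_lt (degree_mul_le _ _) ?_
    calc (C (d - d⁻¹)).degree + (twoBridgeW p q d 0 1).degree
        ≤ 0 + (twoBridgeW p q d 0 1).degree := add_le_add degree_C_le le_rfl
      _ = (twoBridgeW p q d 0 1).degree := zero_add _
      _ < (k : WithBot ℕ) := h01
  have degR : (rileyPoly p q d).degree = (k : WithBot ℕ) := by
    rw [rileyPoly, degree_sub_eq_left_of_degree_lt (by rw [degW]; exact hsub), degW]
  have ndR : (rileyPoly p q d).natDegree = k := natDegree_eq_of_degree_eq_some degR
  have leadR : (rileyPoly p q d).leadingCoeff = s := by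
    rw [leadingCoeff, ndR, rileyPoly, coeff_sub, hc,
      coeff_eq_zero_of_degree_lt hsub, sub_zero]
  refine ⟨degW, degR, ?_, ?_, ?_⟩
  · rw [leadW]; exact hs
  · rw [leadR]; exact hs
  · rw [leadW, leadR]
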